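/- Suppose p, q, r are integers with pqr nonzero and even, and gcd(q,r) = 1. Then u(pq/r)·u(pr/q) = u(p/(qr)), where u is the normalized quadratic Gauss sum function on ℚ. -/

import Mathlib

open Finset

/-- `u(r) = (1/(2q))·Σ_{x=0}^{2q-1} exp(πi·p·x²/q)` where `r = p/q` in lowest terms
with `q > 0` (well-defined on ℚ by invariance under common scaling). -/
noncomputable def u (r : ℚ) : ℂ :=
  (1 / (2 * (r.den : ℂ))) * ∑ x ∈ Finset.range (2 * r.den),
    Complex.exp (Real.pi * Complex.I * r.num * (x : ℂ) ^ 2 / r.den)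

open Complex Function

noncomputable def ee (a : ℤ) (b : ℕ) (x : ℕ) : ℂ :=
  Complex.exp (Real.pi * Complex.I * a * (x : ℂ) ^ 2 / b)

lemma ee_period (a : ℤ) (b : ℕ) (hb : b ≠ 0) (x : ℕ) : ee a b (x + 2 * b) = ee a b x := by
  unfold ee
  have hb' : (b : ℂ) ≠ 0 := Nat.cast_ne_zero.2 hb
  rw [show (Real.pi : ℂ) * Complex.I * a * ((x + 2 * b : ℕ) : ℂ) ^ 2 / b
      = Real.pi * Complex.I * a * (x : ℂ) ^ 2 / b
        + ((a * x * 2 + a * b * 2 : ℤ) : ℂ) * (2 * Real.pi * Complex.I) by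
    push_cast; field_simp; ring]
  rw [Complex.exp_add, Complex.exp_int_mul_two_pi_mul_I, mul_one]

lemma ee_add_mul (a : ℤ) (b : ℕ) (hb : b ≠ 0) (x k : ℕ) :
    ee a b (x + 2 * b * k) = ee a b x := by
  induction k with
  | zero => simp
  | succ k ih => rw [mul_add, mul_one, ← add_assoc, ee_period a b hb, ih]

lemma ee_mod (a : ℤ) (b : ℕ) (hb : b ≠ 0) {x y : ℕ} (h : x % (2 * b) = y % (2 * b)) :
    ee a b x = ee a b y := by
  have h2 : 2 * b ≠ 0 := by positivity
  have e1 : ee a b x = ee a b (x % (2 * b)) := by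
    conv_lhs => rw [show x = x % (2 * b) + 2 * b * (x / (2 * b)) by
      rw [Nat.mod_add_div]]
    rw [ee_add_mul a b hb]
  have e2 : ee a b y = ee a b (y % (2 * b)) := by
    conv_lhs => rw [show y = y % (2 * b) + 2 * b * (y / (2 * b)) by
      rw [Nat.mod_add_div]]
    rw [ee_add_mul a b hb]
  rw [e1, e2, h]

lemma sum_range_mul_of_periodic (g : ℕ → ℂ) (n k : ℕ) (hg : ∀ x, g (x + n) = g x) :
    ∑ x ∈ range (k * n), g x = k • ∑ x ∈ range n, g x := by
  have aux : ∀ m x, g (x + m * n) = g x := by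
    intro m
    induction m with
    | zero => simp
    | succ m ih => intro x; rw [add_mul, one_mul, ← add_assoc, hg, ih]
  induction k with
  | zero => simp
  | succ k ih =>
    rw [Nat.succ_mul, Finset.sum_range_add, ih, succ_nsmul]
    congr 1
    refine Finset.sum_congr rfl fun x _ => ?_
    rw [add_comm (k * n) x, aux]

lemma u_eq (a : ℤ) (b : ℕ) (hb : b ≠ 0) :
    u ((a : ℚ) / (b : ℚ)) = (1 / (2 * (b : ℂ))) * ∑ x ∈ range (2 * b), ee a b x := by
  set t : ℚ := (a : ℚ) / (b : ℚ) with ht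
  have hd : (t.den : ℤ) ∣ (b : ℤ) := by
    have h' : t = Rat.divInt a (b : ℤ) := by rw [ht, Rat.divInt_eq_div]; norm_cast
    rw [h']; exact Rat.den_dvd a b
  obtain ⟨k, hk⟩ : (t.den : ℕ) ∣ b := Int.ofNat_dvd.mp (by exact_mod_cast hd)
  have hdenpos : 0 < t.den := t.pos
  have hden0 : (t.den : ℚ) ≠ 0 := by positivity
  have hk0 : k ≠ 0 := by rintro rfl; simp at hk; exact hb hk
  have hb' : (b : ℚ) ≠ 0 := Nat.cast_ne_zero.2 hb
  have hnum : a = t.num * k := by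
    have h1 : (a : ℚ) * t.den = t.num * b := by
      have : t * b = a := by rw [ht]; field_simp
      calc (a : ℚ) * t.den = t * b * t.den := by rw [this]
        _ = (t * t.den) * b := by ring
        _ = t.num * b := by rw [Rat.mul_den_eq_num]
    have h2 : a * (t.den : ℤ) = t.num * b := by exact_mod_cast h1
    rw [hk] at h2
    push_cast at h2
    have hden' : (t.den : ℤ) ≠ 0 := by exact_mod_cast hdenpos.ne'
    apply mul_right_cancel₀ hden'
    rw [h2]; ring
  -- rewrite ee a b into ee t.num t.den
  have hee : ∀ x : ℕ, ee a b x = ee t.num t.den x := by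
    intro x
    unfold ee
    congr 1
    rw [hnum, hk]
    have hdc : (t.den : ℂ) ≠ 0 := by exact_mod_cast Nat.cast_ne_zero.2 hdenpos.ne'
    have hkc : (k : ℂ) ≠ 0 := Nat.cast_ne_zero.2 hk0
    push_cast
    field_simp
  have hsum : ∑ x ∈ range (2 * b), ee a b x = k • ∑ x ∈ range (2 * t.den), ee t.num t.den x := by
    rw [show (2 * b) = k * (2 * t.den) by rw [hk]; ring]
    rw [Finset.sum_congr rfl (fun x _ => hee x)]
    exact sum_range_mul_of_periodic _ _ _ (ee_period t.num t.den hdenpos.ne')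
  rw [hsum]
  have : u t = (1 / (2 * (t.den : ℂ))) * ∑ x ∈ range (2 * t.den), ee t.num t.den x := rfl
  rw [this, nsmul_eq_mul, hk]
  have hdc : (t.den : ℂ) ≠ 0 := Nat.cast_ne_zero.2 hdenpos.ne'
  have hkc : (k : ℂ) ≠ 0 := Nat.cast_ne_zero.2 hk0
  push_cast
  field_simp

-- generic: sum over G of F∘ψ for surjective ψ with index 2
lemma sum_comp_two {G H : Type*} [AddCommGroup G] [AddCommGroup H] [Fintype G] [Fintype H]
    [DecidableEq H] (ψ : G →+ H) (hs : Function.Surjective ψ)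
    (hcard : Fintype.card G = 2 * Fintype.card H) (F : H → ℂ) :
    ∑ g : G, F (ψ g) = 2 * ∑ h : H, F h := by
  classical
  have hker : Nat.card ψ.ker = 2 := by
    have h1 : Nat.card G = Nat.card (G ⧸ ψ.ker) * Nat.card ψ.ker :=
      AddSubgroup.card_eq_card_quotient_mul_card_addSubgroup ψ.ker
    have h2 : Nat.card (G ⧸ ψ.ker) = Nat.card H :=
      Nat.card_congr (QuotientAddGroup.quotientKerEquivOfSurjective ψ hs).toEquiv
    have hH : 0 < Nat.card H := by
      rw [Nat.card_eq_fintype_card]; exact Fintype.card_pos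
    rw [h2] at h1
    rw [Nat.card_eq_fintype_card, Nat.card_eq_fintype_card (α := H), hcard] at h1
    rw [Nat.card_eq_fintype_card] at hH
    exact (Nat.eq_of_mul_eq_mul_left hH (by rw [← h1]; ring)).symm
  have hfib : ∀ h : H, Fintype.card {g : G // ψ g = h} = 2 := by
    intro h
    obtain ⟨g₀, hg₀⟩ := hs h
    have e : {g : G // ψ g = h} ≃ ψ.ker :=
      { toFun := fun g => ⟨g.1 - g₀, by
          rw [AddMonoidHom.mem_ker, map_sub, g.2, hg₀, sub_self]⟩
        invFun := fun k => ⟨k.1 + g₀, by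
          have := k.2
          rw [AddMonoidHom.mem_ker] at this
          rw [map_add, this, hg₀, zero_add]⟩
        left_inv := fun g => by simp
        right_inv := fun k => by simp }
    rw [Fintype.card_congr e, ← Nat.card_eq_fintype_card, hker]
  calc ∑ g : G, F (ψ g)
      = ∑ h : H, ∑ g : {g : G // ψ g = h}, F (ψ g.1) := (Fintype.sum_fiberwise ψ _).symm
    _ = ∑ h : H, ∑ _g : {g : G // ψ g = h}, F h := by
        refine Fintype.sum_congr _ _ fun h => Fintype.sum_congr _ _ fun g => by rw [g.2]
    _ = ∑ h : H, (Fintype.card {g : G // ψ g = h} : ℂ) * F h := by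
        refine Fintype.sum_congr _ _ fun h => ?_
        rw [Finset.sum_const, nsmul_eq_mul, Fintype.card]
    _ = 2 * ∑ h : H, F h := by
        rw [Finset.mul_sum]
        refine Fintype.sum_congr _ _ fun h => by rw [hfib h]; norm_num

lemma zmod_sum (n : ℕ) [NeZero n] (g : ℕ → ℂ) :
    ∑ z : ZMod n, g z.val = ∑ x ∈ range n, g x := by
  refine Finset.sum_bij' (i := fun z _ => z.val) (j := fun x _ => (x : ZMod n))
    (fun z _ => Finset.mem_range.2 (ZMod.val_lt z)) (fun x _ => Finset.mem_univ _)
    (fun z _ => ZMod.natCast_rightInverse z) (fun x hx => ZMod.val_natCast_of_lt (Finset.mem_range.1 hx))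
    (fun z _ => rfl)

def mulCastHom (m N : ℕ) (c : ℤ) (h : ((c * m : ℤ) : ZMod N) = 0) : ZMod m →+ ZMod N :=
  ZMod.lift m ⟨{ toFun := fun x : ℤ => ((c * x : ℤ) : ZMod N),
                 map_zero' := by push_cast; ring,
                 map_add' := fun x y => by push_cast; ring }, h⟩

lemma mulCastHom_coe (m N : ℕ) (c : ℤ) (h : ((c * m : ℤ) : ZMod N) = 0) (x : ℤ) :
    mulCastHom m N c h ((x : ℤ) : ZMod m) = ((c * x : ℤ) : ZMod N) :=
  ZMod.lift_coe m _ x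

lemma ee_combine (p : ℤ) (q r : ℕ) (hq : q ≠ 0) (hr : r ≠ 0) (v w : ℕ) :
    ee (p * r) q v * ee (p * q) r w = ee p (q * r) (r * v + q * w) := by
  unfold ee
  have hq' : (q : ℂ) ≠ 0 := Nat.cast_ne_zero.2 hq
  have hr' : (r : ℂ) ≠ 0 := Nat.cast_ne_zero.2 hr
  have h : (Real.pi : ℂ) * Complex.I * (p : ℂ) * ((r * v + q * w : ℕ) : ℂ) ^ 2 / ((q * r : ℕ) : ℂ)
      = (Real.pi * Complex.I * ((p * r : ℤ) : ℂ) * (v : ℂ) ^ 2 / q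
        + Real.pi * Complex.I * ((p * q : ℤ) : ℂ) * (w : ℂ) ^ 2 / r)
        + ((p * v * w : ℤ) : ℂ) * (2 * Real.pi * Complex.I) := by
    push_cast
    field_simp
    ring
  rw [h, Complex.exp_add, Complex.exp_add, Complex.exp_int_mul_two_pi_mul_I, mul_one]

lemma core (p : ℤ) (q r : ℕ) (hq : q ≠ 0) (hr : r ≠ 0) (hqr : Nat.Coprime q r) :
    (∑ v ∈ range (2 * q), ee (p * r) q v) * (∑ w ∈ range (2 * r), ee (p * q) r w)
      = 2 * ∑ x ∈ range (2 * (q * r)), ee p (q * r) x := by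
  haveI : NeZero (2 * q) := ⟨by positivity⟩
  haveI : NeZero (2 * r) := ⟨by positivity⟩
  haveI : NeZero (2 * (q * r)) := ⟨by positivity⟩
  have hqr0 : q * r ≠ 0 := mul_ne_zero hq hr
  have h1 : ((r * (2 * q) : ℤ) : ZMod (2 * (q * r))) = 0 := by
    have h : ((r : ℤ) * (2 * (q : ℤ)) : ℤ) = ((2 * (q * r) : ℕ) : ℤ) := by push_cast; ring
    rw [show ((r * (2 * q) : ℤ)) = ((r : ℤ) * (2 * (q : ℤ))) by push_cast; ring, h]
    exact_mod_cast ZMod.natCast_self (2 * (q * r))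
  have h2 : ((q * (2 * r) : ℤ) : ZMod (2 * (q * r))) = 0 := by
    have h : ((q : ℤ) * (2 * (r : ℤ)) : ℤ) = ((2 * (q * r) : ℕ) : ℤ) := by push_cast; ring
    rw [show ((q * (2 * r) : ℤ)) = ((q : ℤ) * (2 * (r : ℤ))) by push_cast; ring, h]
    exact_mod_cast ZMod.natCast_self (2 * (q * r))
  set ψ : ZMod (2 * q) × ZMod (2 * r) →+ ZMod (2 * (q * r)) :=
    (mulCastHom (2 * q) (2 * (q * r)) r h1).coprod (mulCastHom (2 * r) (2 * (q * r)) q h2) with hψ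
  have hψ_apply : ∀ v w : ℤ, ψ ((v : ZMod (2 * q)), (w : ZMod (2 * r)))
      = ((r * v + q * w : ℤ) : ZMod (2 * (q * r))) := by
    intro v w
    rw [hψ, AddMonoidHom.coprod_apply, mulCastHom_coe, mulCastHom_coe]
    push_cast
    ring
  have hsurj : Function.Surjective ψ := by
    intro h
    obtain ⟨n, rfl⟩ := ZMod.intCast_surjective h
    obtain ⟨c, d, hcd⟩ := Int.isCoprime_iff_gcd_eq_one.mpr
      (by rw [Int.gcd_natCast_natCast]; exact hqr)
    refine ⟨((d * n : ℤ), (c * n : ℤ)), ?_⟩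
    rw [hψ_apply]
    congr 1
    calc (r : ℤ) * (d * n) + (q : ℤ) * (c * n) = (c * q + d * r) * n := by ring
      _ = n := by rw [hcd]; ring
  have hcard : Fintype.card (ZMod (2 * q) × ZMod (2 * r))
      = 2 * Fintype.card (ZMod (2 * (q * r))) := by
    rw [Fintype.card_prod, ZMod.card, ZMod.card, ZMod.card]
    ring
  set F : ZMod (2 * (q * r)) → ℂ := fun z => ee p (q * r) z.val with hF
  have hFnat : ∀ m : ℕ, F ((m : ZMod (2 * (q * r)))) = ee p (q * r) m := by
    intro m
    rw [hF]
    exact ee_mod p (q * r) hqr0 (by rw [ZMod.val_natCast, Nat.mod_mod_of_dvd _ dvd_rfl])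
  have conv1 : ∀ (n : ℕ) [NeZero n] (g : ZMod n → ℂ),
      ∑ x ∈ range n, g ↑x = ∑ z : ZMod n, g z := by
    intro n _ g
    rw [← zmod_sum n (fun x : ℕ => g ↑x)]
    exact Fintype.sum_congr _ _ fun z => by rw [ZMod.natCast_rightInverse z]
  calc (∑ v ∈ range (2 * q), ee (p * r) q v) * (∑ w ∈ range (2 * r), ee (p * q) r w)
      = ∑ v ∈ range (2 * q), ∑ w ∈ range (2 * r), ee (p * r) q v * ee (p * q) r w := by
        rw [Finset.sum_mul_sum]
    _ = ∑ v ∈ range (2 * q), ∑ w ∈ range (2 * r), F (ψ (↑v, ↑w)) := by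
        refine Finset.sum_congr rfl fun v _ => Finset.sum_congr rfl fun w _ => ?_
        rw [ee_combine p q r hq hr v w,
          show ((v : ZMod (2*q)) = ((v : ℤ) : ZMod (2*q))) by push_cast; rfl,
          show ((w : ZMod (2*r)) = ((w : ℤ) : ZMod (2*r))) by push_cast; rfl, hψ_apply,
          show ((r * (v:ℤ) + q * w : ℤ) : ZMod (2 * (q * r)))
            = ((r * v + q * w : ℕ) : ZMod (2 * (q * r))) by push_cast; ring,
          hFnat]
    _ = ∑ z : ZMod (2 * q), ∑ w ∈ range (2 * r), F (ψ (z, ↑w)) :=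
        conv1 (2 * q) (fun z => ∑ w ∈ range (2 * r), F (ψ (z, ↑w)))
    _ = ∑ z : ZMod (2 * q), ∑ y : ZMod (2 * r), F (ψ (z, y)) :=
        Fintype.sum_congr _ _ fun z => conv1 (2 * r) (fun y => F (ψ (z, y)))
    _ = ∑ g : ZMod (2 * q) × ZMod (2 * r), F (ψ g) := by
        exact (Fintype.sum_prod_type (f := fun g : ZMod (2 * q) × ZMod (2 * r) => F (ψ g))).symm
    _ = 2 * ∑ h : ZMod (2 * (q * r)), F h := sum_comp_two ψ hsurj hcard F
    _ = 2 * ∑ x ∈ range (2 * (q * r)), ee p (q * r) x := by rw [hF, zmod_sum]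

lemma main_pos (p : ℤ) (q r : ℕ) (hq : q ≠ 0) (hr : r ≠ 0) (hqr : Nat.Coprime q r) :
    u (((p * q : ℤ) : ℚ) / ((r : ℕ) : ℚ)) * u (((p * r : ℤ) : ℚ) / ((q : ℕ) : ℚ))
      = u ((p : ℚ) / (((q * r : ℕ)) : ℚ)) := by
  rw [u_eq (p * q) r hr, u_eq (p * r) q hq, u_eq p (q * r) (mul_ne_zero hq hr)]
  have h := core p q r hq hr hqr
  have hq' : (q : ℂ) ≠ 0 := Nat.cast_ne_zero.2 hq
  have hr' : (r : ℂ) ≠ 0 := Nat.cast_ne_zero.2 hr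
  set A := ∑ v ∈ range (2 * q), ee (p * r) q v
  set B := ∑ w ∈ range (2 * r), ee (p * q) r w
  set C := ∑ x ∈ range (2 * (q * r)), ee p (q * r) x
  calc (1 / (2 * (r : ℂ)) * B) * (1 / (2 * (q : ℂ)) * A)
      = (1 / (2 * (r : ℂ)) * (1 / (2 * (q : ℂ)))) * (A * B) := by ring
    _ = (1 / (2 * (r : ℂ)) * (1 / (2 * (q : ℂ)))) * (2 * C) := by rw [h]
    _ = 1 / (2 * ((q * r : ℕ) : ℂ)) * C := by push_cast; field_simp

lemma neg_neg_div (a b : ℤ) : ((-a : ℤ) : ℚ) / ((-b : ℤ) : ℚ) = ((a : ℤ) : ℚ) / ((b : ℤ) : ℚ) := by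
  push_cast; rw [neg_div_neg_eq]

lemma key (p q r : ℤ) (hq : 0 < q) (hr : 0 < r) (hqr : Int.gcd q r = 1) :
    u (((p * q : ℤ) : ℚ) / ((r : ℤ) : ℚ)) * u (((p * r : ℤ) : ℚ) / ((q : ℤ) : ℚ))
      = u ((p : ℚ) / ((q * r : ℤ) : ℚ)) := by
  obtain ⟨q', rfl⟩ := Int.eq_ofNat_of_zero_le hq.le
  obtain ⟨r', rfl⟩ := Int.eq_ofNat_of_zero_le hr.le
  have hq' : q' ≠ 0 := by simpa using hq.ne'
  have hr' : r' ≠ 0 := by simpa using hr.ne'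
  have hcop : Nat.Coprime q' r' := by rwa [Int.gcd_natCast_natCast] at hqr
  have h := main_pos p q' r' hq' hr' hcop
  have e1 : (((p * (q' : ℤ) : ℤ)) : ℚ) / (((r' : ℤ)) : ℚ) = ((p * q' : ℤ) : ℚ) / ((r' : ℕ) : ℚ) := by
    push_cast; ring
  have e2 : (((p * (r' : ℤ) : ℤ)) : ℚ) / (((q' : ℤ)) : ℚ) = ((p * r' : ℤ) : ℚ) / ((q' : ℕ) : ℚ) := by
    push_cast; ring
  have e3 : ((p : ℚ)) / ((((q' : ℤ) * (r' : ℤ) : ℤ)) : ℚ) = (p : ℚ) / (((q' * r' : ℕ)) : ℚ) := by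
    push_cast; ring
  rw [e1, e2, e3]
  exact h

/-- If `pqr` is nonzero and even and `gcd(q,r) = 1`, then `u(pq/r)·u(pr/q) = u(p/(qr))`. -/
theorem u_three_term (p q r : ℤ) (h0 : p * q * r ≠ 0) (he : Even (p * q * r))
    (hqr : Int.gcd q r = 1) :
    u (((p * q : ℤ) : ℚ) / (r : ℚ)) * u (((p * r : ℤ) : ℚ) / (q : ℚ))
      = u ((p : ℚ) / ((q * r : ℤ) : ℚ)) := by
  have hq0 : q ≠ 0 := fun h => h0 (by rw [h]; ring)
  have hr0 : r ≠ 0 := fun h => h0 (by rw [h]; ring)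
  rcases lt_or_gt_of_ne hq0 with hq | hq <;> rcases lt_or_gt_of_ne hr0 with hr | hr
  · -- q < 0, r < 0 : use (p, -q, -r)
    have h := key p (-q) (-r) (by omega) (by omega) (by simpa [Int.gcd] using hqr)
    rw [show ((p * -q : ℤ) : ℚ) / ((-r : ℤ) : ℚ) = ((p * q : ℤ) : ℚ) / ((r : ℤ) : ℚ) by
        rw [show (p * -q : ℤ) = -(p * q) by ring, neg_neg_div],
      show ((p * -r : ℤ) : ℚ) / ((-q : ℤ) : ℚ) = ((p * r : ℤ) : ℚ) / ((q : ℤ) : ℚ) by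
        rw [show (p * -r : ℤ) = -(p * r) by ring, neg_neg_div],
      show ((-q * -r : ℤ) : ℚ) = ((q * r : ℤ) : ℚ) by push_cast; ring] at h
    exact h
  · -- q < 0, r > 0 : use (-p, -q, r)
    have h := key (-p) (-q) r (by omega) hr (by simpa [Int.gcd] using hqr)
    rw [show ((-p * -q : ℤ) : ℚ) = ((p * q : ℤ) : ℚ) by push_cast; ring,
      show ((-p * r : ℤ) : ℚ) / ((-q : ℤ) : ℚ) = ((p * r : ℤ) : ℚ) / ((q : ℤ) : ℚ) by
        rw [show (-p * r : ℤ) = -(p * r) by ring, neg_neg_div],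
      show ((-p : ℤ) : ℚ) / ((-q * r : ℤ) : ℚ) = ((p : ℤ) : ℚ) / ((q * r : ℤ) : ℚ) by
        rw [show (-q * r : ℤ) = -(q * r) by ring, neg_neg_div]] at h
    exact h
  · -- q > 0, r < 0 : use (-p, q, -r)
    have h := key (-p) q (-r) hq (by omega) (by simpa [Int.gcd] using hqr)
    rw [show ((-p * q : ℤ) : ℚ) / ((-r : ℤ) : ℚ) = ((p * q : ℤ) : ℚ) / ((r : ℤ) : ℚ) by
        rw [show (-p * q : ℤ) = -(p * q) by ring, neg_neg_div],
      show ((-p * -r : ℤ) : ℚ) = ((p * r : ℤ) : ℚ) by push_cast; ring,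
      show ((-p : ℤ) : ℚ) / ((q * -r : ℤ) : ℚ) = ((p : ℤ) : ℚ) / ((q * r : ℤ) : ℚ) by
        rw [show (q * -r : ℤ) = -(q * r) by ring, neg_neg_div]] at h
    exact h
  · exact key p q r hq hr hqr
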